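/- arXiv:2504.01837 — 2 statements merged into one kernel-verified Lean document; each statement's English description precedes it below -/
import Mathlib

section
/- Let α > 1 and set a = (∫_{−π/2}^{π/2} (cos x)^(2/(α−1)) dx)^(−1). Define p(x) = a·(cos x)^(2/(α−1)) for x ∈ [−π/2, π/2] and p(x) = 0 otherwise. Then p is a probability density on ℝ and it achieves equality in the one-dimensional Rényi-entropic isoperimetric inequality: N_α(p) · I_α(p) = (2π/(α−1)) · (2α/(α+1))^((α+1)/(α−1)) · (Γ((α+1)/(2(α−1))) / Γ(α/(α−1)))². -/
open MeasureTheory Real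

/-- The Rényi entropy power of order `α` of a density `p` on `ℝ`. -/
noncomputable def renyiEntropyPower (α : ℝ) (p : ℝ → ℝ) : ℝ :=
  (∫ x, p x ^ α) ^ (-2 / (α - 1))

/-- The Rényi–Fisher information of order `α` of a density `p` on `ℝ`. -/
noncomputable def renyiFisherInfo (α : ℝ) (p : ℝ → ℝ) : ℝ :=
  α * (∫ x in {x | 0 < p x}, deriv p x ^ 2 * p x ^ (α - 2)) / (∫ x, p x ^ α)

section AuxRenyi
open intervalIntegral Set

lemma gamma_beta_real (u v : ℝ) (hu : 0 < u) (hv : 0 < v) :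
    Gamma u * Gamma v = Gamma (u + v) * ∫ x in (0:ℝ)..1, x ^ (u-1) * (1-x) ^ (v-1) := by
  have h := Complex.Gamma_mul_Gamma_eq_betaIntegral (s := u) (t := v)
    (by simpa using hu) (by simpa using hv)
  have hbeta : Complex.betaIntegral u v
      = ((∫ x in (0:ℝ)..1, x ^ (u-1) * (1-x) ^ (v-1) : ℝ) : ℂ) := by
    rw [Complex.betaIntegral, ← intervalIntegral.integral_ofReal]
    refine intervalIntegral.integral_congr_ae ?_
    filter_upwards with x hx'
    rw [Set.uIoc_of_le zero_le_one] at hx'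
    rw [Complex.ofReal_mul, Complex.ofReal_cpow hx'.1.le,
      Complex.ofReal_cpow (by linarith [hx'.2] : (0:ℝ) ≤ 1 - x)]
    push_cast
    ring
  rw [hbeta] at h
  have h2 := congrArg Complex.re h
  simpa [← Complex.ofReal_mul, Complex.Gamma_ofReal, ← Complex.ofReal_add] using h2

lemma beta_integrableOn {u v : ℝ} (hu : 0 < u) (hv : 0 < v) :
    IntegrableOn (fun x : ℝ => x ^ (u-1) * (1-x) ^ (v-1)) (Set.Icc 0 1) := by
  have h := (Complex.betaIntegral_convergent (u := u) (v := v)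
    (by simpa using hu) (by simpa using hv)).1
  rw [integrableOn_Icc_iff_integrableOn_Ioc]
  have h2 : IntegrableOn (fun x : ℝ =>
      ((x:ℂ) ^ ((u:ℂ)-1) * ((1:ℂ)-x) ^ ((v:ℂ)-1)).re) (Set.Ioc 0 1) := h.re
  refine h2.congr_fun ?_ measurableSet_Ioc
  intro x hx
  have : (x:ℂ) ^ ((u:ℂ)-1) * ((1:ℂ)-x) ^ ((v:ℂ)-1)
      = ((x ^ (u-1) * (1-x) ^ (v-1) : ℝ) : ℂ) := by
    rw [Complex.ofReal_mul, Complex.ofReal_cpow hx.1.le,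
      Complex.ofReal_cpow (by linarith [hx.2] : (0:ℝ) ≤ 1 - x)]
    push_cast; ring
  simp [this]

lemma cos_rpow_continuous {s : ℝ} (hs : 0 < s) :
    Continuous (fun x : ℝ => cos x ^ s) := by
  rw [continuous_iff_continuousAt]
  intro x
  exact (Real.continuousAt_rpow_const _ _ (Or.inr hs.le)).comp continuous_cos.continuousAt

lemma key_eq {s : ℝ} (hs : 0 < s) {θ : ℝ} (h1 : 0 < θ) (h2 : θ ≤ π/2) :
    (2 * sin θ * cos θ) • ((sin θ ^ 2) ^ ((1:ℝ)/2-1) * (1 - sin θ ^ 2) ^ ((s+1)/2-1))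
      = 2 * cos θ ^ s := by
  have hsin : 0 < sin θ := sin_pos_of_pos_of_lt_pi h1 (by linarith [pi_pos])
  have hcos : 0 ≤ cos θ := cos_nonneg_of_mem_Icc ⟨by linarith [pi_pos], h2⟩
  have e1 : (sin θ ^ 2) ^ ((1:ℝ)/2-1) = (sin θ)⁻¹ := by
    rw [← Real.rpow_natCast (sin θ) 2, ← Real.rpow_mul hsin.le]
    norm_num [Real.rpow_neg_one]
  have e2 : (1 - sin θ ^ 2) ^ ((s+1)/2-1) = cos θ ^ (s-1) := by
    rw [← cos_sq', ← Real.rpow_natCast (cos θ) 2, ← Real.rpow_mul hcos]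
    push_cast
    congr 1
    ring
  rw [smul_eq_mul, e1, e2]
  rcases eq_or_lt_of_le hcos with hc0 | hcpos
  · rw [← hc0, Real.zero_rpow hs.ne']
    ring
  · have e3 : cos θ * cos θ ^ (s-1) = cos θ ^ s := by
      nth_rewrite 1 [← Real.rpow_one (cos θ)]
      rw [← Real.rpow_add hcpos]
      norm_num
    rw [← e3]
    field_simp

lemma subst_half {s : ℝ} (hs : 0 < s) :
    (∫ x in (0:ℝ)..1, x ^ ((1:ℝ)/2-1) * (1-x) ^ ((s+1)/2-1)) =
      2 * ∫ x in (0:ℝ)..(π/2), cos x ^ s := by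
  have hpi : (0:ℝ) < π/2 := by positivity
  set g : ℝ → ℝ := fun x => x ^ ((1:ℝ)/2-1) * (1-x) ^ ((s+1)/2-1) with hg
  set f : ℝ → ℝ := fun θ => sin θ ^ 2 with hf
  set f' : ℝ → ℝ := fun θ => 2 * sin θ * cos θ with hf'
  have hmm : min 0 (π/2) = 0 := min_eq_left hpi.le
  have hMM : max 0 (π/2) = π/2 := max_eq_right hpi.le
  have key : (∫ θ in (0:ℝ)..(π/2), f' θ • g (f θ)) = ∫ u in (f 0)..(f (π/2)), g u := by
    apply intervalIntegral.integral_comp_smul_deriv''' (f := f) (f' := f') (g := g)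
    · exact ((continuous_sin.pow 2).continuousOn)
    · intro x hx
      have : HasDerivAt f (f' x) x := by
        have := (Real.hasDerivAt_sin x).pow 2
        exact this.congr_deriv (by rw [hf']; push_cast; ring)
      exact this.hasDerivWithinAt
    · rw [hmm, hMM]
      have himg : f '' Ioo 0 (π/2) ⊆ Ioo 0 1 := by
        rintro - ⟨θ, hθ, rfl⟩
        have h1 : 0 < sin θ := sin_pos_of_pos_of_lt_pi hθ.1 (by linarith [pi_pos, hθ.2])
        have h2 : sin θ < 1 := by
          have := Real.cos_pos_of_mem_Ioo ⟨by linarith [pi_pos, hθ.1], hθ.2⟩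
          nlinarith [sin_sq_add_cos_sq θ]
        refine ⟨?_, ?_⟩ <;> simp only [hf] <;> nlinarith
      refine ContinuousOn.mono ?_ himg
      intro t ht
      apply ContinuousWithinAt.mul
      · exact ((Real.continuousAt_rpow_const _ _ (Or.inl ht.1.ne'))).continuousWithinAt
      · exact (((Real.continuousAt_rpow_const (1-t) _ (Or.inl (by linarith [ht.2] : 1 - t ≠ 0)))).comp
          (by fun_prop)).continuousWithinAt
    · refine (beta_integrableOn (u := (1:ℝ)/2) (v := (s+1)/2) (by norm_num) (by linarith)).mono_set ?_
      rintro - ⟨θ, -, rfl⟩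
      exact ⟨sq_nonneg _, by simp only [hf]; nlinarith [neg_one_le_sin θ, sin_le_one θ]⟩
    · rw [uIcc_of_le hpi.le, integrableOn_Icc_iff_integrableOn_Ioc,
        integrableOn_Ioc_iff_integrableOn_Ioo]
      have hint : IntegrableOn (fun θ : ℝ => 2 * cos θ ^ s) (Ioo 0 (π/2)) :=
        ((continuous_const.mul (cos_rpow_continuous hs)).integrableOn_Icc).mono_set
          Ioo_subset_Icc_self
      refine hint.congr_fun ?_ measurableSet_Ioo
      intro θ hθ
      simpa [hf, hf', hg, Function.comp] using (key_eq hs hθ.1 hθ.2.le).symm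
  have hf0 : f 0 = 0 := by simp [hf]
  have hf1 : f (π/2) = 1 := by simp [hf]
  rw [hf0, hf1] at key
  rw [← key]
  rw [show (2 : ℝ) * ∫ x in (0:ℝ)..(π/2), cos x ^ s
      = ∫ x in (0:ℝ)..(π/2), 2 * cos x ^ s by rw [intervalIntegral.integral_const_mul]]
  refine intervalIntegral.integral_congr_ae ?_
  filter_upwards with θ hθ
  rw [Set.uIoc_of_le hpi.le] at hθ
  simpa [hf, hf', hg] using (key_eq hs hθ.1 hθ.2)

lemma G_eq {s : ℝ} (hs : 0 < s) :
    ∫ x in Set.Icc (-(π/2)) (π/2), cos x ^ s = √π * Gamma ((s+1)/2) / Gamma (s/2+1) := by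
  have hpi : (0:ℝ) < π/2 := by positivity
  have hcont := cos_rpow_continuous hs
  have h1 : ∫ x in Set.Icc (-(π/2)) (π/2), cos x ^ s
      = ∫ x in (-(π/2))..(π/2), cos x ^ s := by
    rw [intervalIntegral.integral_of_le (by linarith), integral_Icc_eq_integral_Ioc]
  have h2 : (∫ x in (-(π/2))..(0:ℝ), cos x ^ s) = ∫ x in (0:ℝ)..(π/2), cos x ^ s := by
    have h := intervalIntegral.integral_comp_neg (a := (0:ℝ)) (b := π/2) (fun x => cos x ^ s)
    simp only [Real.cos_neg, neg_zero] at h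
    exact h.symm
  have h3 : (∫ x in (-(π/2))..(π/2), cos x ^ s)
      = (∫ x in (-(π/2))..(0:ℝ), cos x ^ s) + ∫ x in (0:ℝ)..(π/2), cos x ^ s :=
    (intervalIntegral.integral_add_adjacent_intervals
      (hcont.intervalIntegrable _ _) (hcont.intervalIntegrable _ _)).symm
  have h4 := gamma_beta_real (1/2) ((s+1)/2) (by norm_num) (by linarith)
  rw [subst_half hs, Real.Gamma_one_half_eq] at h4
  have h5 : (1:ℝ)/2 + (s+1)/2 = s/2 + 1 := by ring
  rw [h5] at h4
  have hG : 0 < Gamma (s/2+1) := Real.Gamma_pos_of_pos (by linarith)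
  rw [h1, h3, h2, ← two_mul]
  field_simp at h4 ⊢
  linarith [h4]

lemma G_pos {s : ℝ} (hs : 0 < s) :
    0 < ∫ x in Set.Icc (-(π/2)) (π/2), cos x ^ s := by
  rw [G_eq hs]
  have := Real.Gamma_pos_of_pos (show 0 < (s+1)/2 by linarith)
  have := Real.Gamma_pos_of_pos (show 0 < s/2+1 by linarith)
  have := Real.sqrt_pos.mpr pi_pos
  positivity

end AuxRenyi

theorem renyi_entropic_isoperimetric_dim1_alpha_gt_one_extremizer
    (α : ℝ) (hα : 1 < α) (a : ℝ)
    (ha : a = (∫ x in Set.Icc (-(π / 2)) (π / 2), Real.cos x ^ (2 / (α - 1)))⁻¹)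
    (p : ℝ → ℝ)
    (hp : p = fun x =>
      if x ∈ Set.Icc (-(π / 2)) (π / 2) then a * Real.cos x ^ (2 / (α - 1)) else 0) :
    (∀ x, 0 ≤ p x) ∧ Integrable p ∧ (∫ x, p x) = 1 ∧
      renyiEntropyPower α p * renyiFisherInfo α p =
        2 * π / (α - 1) * (2 * α / (α + 1)) ^ ((α + 1) / (α - 1)) *
          (Gamma ((α + 1) / (2 * (α - 1))) / Gamma (α / (α - 1))) ^ 2 := by
  have hα1 : (0:ℝ) < α - 1 := by linarith
  have hα0 : (0:ℝ) < α := by linarith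
  have hpi2 : (0:ℝ) < π / 2 := by positivity
  set c : ℝ := 2 / (α - 1) with hcdef
  have hc : 0 < c := by positivity
  have hcα : c * α = c + 2 := by rw [hcdef]; field_simp; ring
  set g := ∫ x in Set.Icc (-(π/2)) (π/2), cos x ^ c with hgdef
  set h := ∫ x in Set.Icc (-(π/2)) (π/2), cos x ^ (c+2) with hhdef
  have hgpos : 0 < g := G_pos hc
  have hhpos : 0 < h := G_pos (by linarith)
  have hapos : 0 < a := by rw [ha]; exact inv_pos.mpr hgpos
  -- nonnegativity
  have hnn : ∀ x, 0 ≤ p x := by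
    intro x
    rw [hp]
    by_cases hx : x ∈ Set.Icc (-(π/2)) (π/2)
    · simp only [if_pos hx]
      exact mul_nonneg hapos.le (Real.rpow_nonneg (Real.cos_nonneg_of_mem_Icc hx) _)
    · simp only [if_neg hx]; exact le_refl 0
  -- p as indicator
  have hpind : p = (Set.Icc (-(π/2)) (π/2)).indicator (fun x => a * cos x ^ c) := by
    funext x; rw [hp, Set.indicator_apply]
  have hcont : Continuous (fun x : ℝ => a * cos x ^ c) :=
    continuous_const.mul (cos_rpow_continuous hc)
  -- integrability
  have hint : Integrable p := by
    rw [hpind]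
    exact (hcont.integrableOn_Icc).integrable_indicator measurableSet_Icc
  -- integral = 1
  have hint1 : (∫ x, p x) = 1 := by
    rw [hpind, integral_indicator measurableSet_Icc, integral_const_mul, ← hgdef, ha]
    exact inv_mul_cancel₀ hgpos.ne'
  refine ⟨hnn, hint, hint1, ?_⟩
  -- ∫ p^α
  have hpow : (fun x => p x ^ α) =
      (Set.Icc (-(π/2)) (π/2)).indicator (fun x => a ^ α * cos x ^ (c * α)) := by
    funext x
    rw [hp, Set.indicator_apply]
    by_cases hx : x ∈ Set.Icc (-(π/2)) (π/2)
    · simp only [if_pos hx]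
      rw [Real.mul_rpow hapos.le (Real.rpow_nonneg (Real.cos_nonneg_of_mem_Icc hx) _),
        ← Real.rpow_mul (Real.cos_nonneg_of_mem_Icc hx)]
    · simp only [if_neg hx]
      exact Real.zero_rpow hα0.ne'
  have hIα : (∫ x, p x ^ α) = a ^ α * h := by
    rw [hpow, integral_indicator measurableSet_Icc, integral_const_mul, hhdef, hcα]
  -- positivity set
  have hset : {x | 0 < p x} = Set.Ioo (-(π/2)) (π/2) := by
    ext x
    simp only [Set.mem_setOf_eq]
    constructor
    · intro hx
      by_contra hxn
      have hz : p x = 0 := by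
        rw [hp]
        by_cases hxi : x ∈ Set.Icc (-(π/2)) (π/2)
        · simp only [if_pos hxi]
          have hcos : cos x = 0 := by
            rcases hxi with ⟨h1, h2⟩
            rcases eq_or_lt_of_le h1 with h1e | h1l
            · rw [← h1e, Real.cos_neg, Real.cos_pi_div_two]
            rcases eq_or_lt_of_le h2 with h2e | h2l
            · rw [h2e, Real.cos_pi_div_two]
            exact absurd ⟨h1l, h2l⟩ hxn
          rw [hcos, Real.zero_rpow hc.ne', mul_zero]
        · simp only [if_neg hxi]
      rw [hz] at hx; exact lt_irrefl 0 hx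
    · intro hx
      have hcos : 0 < cos x := Real.cos_pos_of_mem_Ioo hx
      rw [hp]
      simp only [if_pos (Set.Ioo_subset_Icc_self hx)]
      exact mul_pos hapos (Real.rpow_pos_of_pos hcos _)
  -- derivative on the open interval
  have hderiv : ∀ x ∈ Set.Ioo (-(π/2)) (π/2),
      deriv p x = a * (c * cos x ^ (c-1) * (-sin x)) := by
    intro x hx
    have hcos : 0 < cos x := Real.cos_pos_of_mem_Ioo hx
    have hev : p =ᶠ[nhds x] (fun y => a * cos y ^ c) := by
      filter_upwards [Icc_mem_nhds hx.1 hx.2] with y hy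
      rw [hp]; simp only [if_pos hy]
    have hda : HasDerivAt (fun y => a * cos y ^ c)
        (a * (c * cos x ^ (c-1) * (-sin x))) x :=
      by simpa [mul_comm, mul_assoc, mul_left_comm] using
        ((Real.hasDerivAt_cos x).rpow_const (p := c) (Or.inl hcos.ne')).const_mul a
    rw [hev.deriv_eq]
    exact hda.deriv
  -- numerator of Fisher info
  have hnum : (∫ x in {x | 0 < p x}, deriv p x ^ 2 * p x ^ (α-2))
      = a ^ α * c^2 * (g - h) := by
    rw [hset]
    have heq : ∀ x ∈ Set.Ioo (-(π/2)) (π/2),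
        deriv p x ^ 2 * p x ^ (α-2) = a ^ α * c^2 * (cos x ^ c - cos x ^ (c+2)) := by
      intro x hx
      have hcos : 0 < cos x := Real.cos_pos_of_mem_Ioo hx
      rw [hderiv x hx, hp]
      simp only [if_pos (Set.Ioo_subset_Icc_self hx)]
      rw [Real.mul_rpow hapos.le (Real.rpow_nonneg hcos.le _), ← Real.rpow_mul hcos.le]
      have h1 : cos x ^ (c-1) * cos x ^ (c-1) * cos x ^ (c*(α-2)) = cos x ^ c := by
        rw [← Real.rpow_add hcos, ← Real.rpow_add hcos]
        congr 1
        have e : c*(α-2) = (c+2) - 2*c := by rw [← hcα]; ring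
        linarith
      have h2 : a^(2:ℕ) * a^(α-2) = a ^ α := by
        rw [← Real.rpow_natCast a 2, ← Real.rpow_add hapos]; norm_num
      have h4 : cos x ^ c * cos x ^ (2:ℕ) = cos x ^ (c+2) := by
        rw [← Real.rpow_natCast (cos x) 2, ← Real.rpow_add hcos]; norm_num
      calc (a * (c * cos x ^ (c-1) * (-sin x)))^2 * (a^(α-2) * cos x ^ (c*(α-2)))
          = (a^(2:ℕ) * a^(α-2)) * c^2 *
              ((cos x ^ (c-1) * cos x ^ (c-1) * cos x ^ (c*(α-2))) * sin x^2) := by ring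
        _ = a ^ α * c^2 * (cos x ^ c * (1 - cos x ^ (2:ℕ))) := by
            rw [h2, h1, Real.sin_sq]
        _ = a ^ α * c^2 * (cos x ^ c - cos x ^ (c+2)) := by rw [← h4]; ring
    rw [MeasureTheory.setIntegral_congr_fun measurableSet_Ioo heq, integral_const_mul]
    congr 1
    have i1 : IntegrableOn (fun x : ℝ => cos x ^ c) (Set.Ioo (-(π/2)) (π/2)) :=
      ((cos_rpow_continuous hc).integrableOn_Icc).mono_set Set.Ioo_subset_Icc_self
    have i2 : IntegrableOn (fun x : ℝ => cos x ^ (c+2)) (Set.Ioo (-(π/2)) (π/2)) :=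
      ((cos_rpow_continuous (by linarith : (0:ℝ) < c+2)).integrableOn_Icc).mono_set
        Set.Ioo_subset_Icc_self
    rw [integral_sub i1 i2]
    congr 1
    · rw [hgdef, MeasureTheory.integral_Icc_eq_integral_Ioc,
        MeasureTheory.integral_Ioc_eq_integral_Ioo]
    · rw [hhdef, MeasureTheory.integral_Icc_eq_integral_Ioc,
        MeasureTheory.integral_Ioc_eq_integral_Ioo]
  -- Gamma facts
  have hsπ : (0:ℝ) < √π := Real.sqrt_pos.mpr pi_pos
  have hQ : Gamma ((α+1)/(2*(α-1))) / Gamma (α/(α-1)) = g / √π := by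
    have hΓ : 0 < Gamma (α/(α-1)) := Real.Gamma_pos_of_pos (by positivity)
    rw [hgdef, G_eq hc]
    have e1 : (c+1)/2 = (α+1)/(2*(α-1)) := by rw [hcdef]; field_simp; ring
    have e2 : c/2+1 = α/(α-1) := by rw [hcdef]; field_simp; ring
    rw [e1, e2]
    field_simp
  have hgG : 0 < Gamma ((c+1)/2) := Real.Gamma_pos_of_pos (by positivity)
  have hhG : 0 < Gamma (c/2+1) := Real.Gamma_pos_of_pos (by positivity)
  have hgh : h = g * ((c+1)/(c+2)) := by
    rw [hgdef, hhdef, G_eq hc, G_eq (by linarith : (0:ℝ) < c+2)]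
    have e1 : (c+2+1)/2 = (c+1)/2 + 1 := by ring
    have e2 : (c+2)/2+1 = (c/2+1) + 1 := by ring
    rw [e1, e2, Real.Gamma_add_one (by positivity), Real.Gamma_add_one (by positivity)]
    field_simp
  have haα : a ^ α = g ^ (-α) := by
    rw [ha, Real.inv_rpow hgpos.le, ← Real.rpow_neg hgpos.le]
  have hc1 : (0:ℝ) < c+1 := by linarith
  have hc2 : (0:ℝ) < c+2 := by linarith
  have hqpos : (0:ℝ) < (c+1)/(c+2) := by positivity
  have hX : a ^ α * h = g^(1-α) * ((c+1)/(c+2)) := by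
    rw [haα, hgh, show g^(-α) * (g * ((c+1)/(c+2))) = (g^(-α) * g^(1:ℝ)) * ((c+1)/(c+2)) by
      rw [Real.rpow_one]; ring, ← Real.rpow_add hgpos]
    rw [show -α + 1 = 1 - α by ring]
  have hN : (g^(1-α) * ((c+1)/(c+2))) ^ (-2/(α-1)) = g^(2:ℕ) * ((c+2)/(c+1))^c := by
    have hmc : -2/(α-1) = -c := by rw [hcdef]; ring
    rw [hmc, Real.mul_rpow (Real.rpow_pos_of_pos hgpos _).le hqpos.le]
    congr 1
    · rw [← Real.rpow_mul hgpos.le]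
      rw [show (1-α)*(-c) = ((2:ℕ):ℝ) by rw [hcdef]; push_cast; field_simp; ring]
      rw [Real.rpow_natCast]
    · rw [Real.rpow_neg hqpos.le, show (c+2)/(c+1) = ((c+1)/(c+2))⁻¹ by rw [inv_div],
        Real.inv_rpow hqpos.le]
  simp only [renyiEntropyPower, renyiFisherInfo]
  rw [hIα, hnum, hQ, hX, hN]
  have hbase : 2*α/(α+1) = (c+2)/(c+1) := by rw [hcdef]; field_simp; ring
  have hexp : (α+1)/(α-1) = c+1 := by rw [hcdef]; field_simp; ring
  rw [hbase, hexp, Real.rpow_add (by positivity : (0:ℝ) < (c+2)/(c+1)), Real.rpow_one]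
  rw [hgh, haα, show (g/√π)^2 = g^2/π by rw [div_pow, Real.sq_sqrt pi_pos.le]]
  have hrel : g^(1-α) = g^(-α) * g := by
    rw [show (1:ℝ)-α = -α + 1 by ring, Real.rpow_add hgpos, Real.rpow_one]
  rw [hrel]
  have hgα : (0:ℝ) < g^(-α) := Real.rpow_pos_of_pos hgpos _
  have hR : (0:ℝ) < ((c+2)/(c+1))^c := Real.rpow_pos_of_pos (by positivity) _
  field_simp
  linear_combination (c*α+2) * hcα
end

section
/- For every α > 0 with α ≠ 1, one has 2π·α^(1/(α−1)) > r_{α,1}, where r_{α,1} = (2π/(α−1))·(2α/(α+1))^((α+1)/(α−1))·(Γ((α+1)/(2(α−1)))/Γ(α/(α−1)))² when α > 1, and r_{α,1} = (4πα/(1−α²))·((α+1)/(2α))^(2α/(1−α))·(Γ(α/(1−α))/Γ((α+1)/(2(1−α))))² when 0 < α < 1. -/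
open Real Filter Set MeasureTheory
open scoped Topology

private lemma log_sub_log_le {u v : ℝ} (hu : 0 < u) (hv : 0 < v) :
    Real.log u - Real.log v ≤ u / v - 1 := by
  rw [← Real.log_div hu.ne' hv.ne']
  exact Real.log_le_sub_one_of_pos (div_pos hu hv)

private lemma pos_of_strictAntiOn_tendsto {f : ℝ → ℝ}
    (hanti : StrictAntiOn f (Ioi 0)) (hlim : Tendsto f atTop (𝓝 0)) {x : ℝ} (hx : 0 < x) :
    0 < f x := by
  have h1 : 0 ≤ f (x + 1) := by
    refine le_of_tendsto hlim ?_
    filter_upwards [eventually_ge_atTop (x + 1)] with y hy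
    rcases eq_or_lt_of_le hy with h | h
    · rw [← h]
    · exact (hanti (by simp; linarith) (by simp; linarith) h).le
  have h2 : f (x + 1) < f x := hanti (by simpa using hx) (by simp; linarith) (by linarith)
  linarith

private lemma log_shift {x : ℝ} (hx : 0 < x) :
    Real.log (x + 1) - Real.log x = Real.log (2 * x + 2) - Real.log (2 * x) := by
  have h1 : (2 : ℝ) * x + 2 = 2 * (x + 1) := by ring
  rw [h1, Real.log_mul (by norm_num) (by linarith), Real.log_mul (by norm_num) hx.ne']
  ring
private noncomputable def Ffun (x : ℝ) : ℝ :=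
  x * (Real.log (x + 1) - Real.log x) -
    (2 * x + 1) * (Real.log (2 * x + 2) - Real.log (2 * x + 1)) +
    (Real.log (4 * x + 1) - Real.log (4 * x))

private noncomputable def Gfun (x : ℝ) : ℝ :=
  x * (Real.log (x + 1) - Real.log x) -
    2 * x * (Real.log (2 * x + 1) - Real.log (2 * x)) +
    (Real.log (4 * x + 3) - Real.log (4 * x + 2))

private lemma hasDerivAt_log_affine {a b x : ℝ} (h : a * x + b ≠ 0) :
    HasDerivAt (fun y : ℝ => Real.log (a * y + b)) (a / (a * x + b)) x := by
  have h1 : HasDerivAt (fun y : ℝ => a * y + b) a x := by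
    simpa using ((hasDerivAt_id x).const_mul a).add_const b
  exact ((Real.hasDerivAt_log h).comp x h1).congr_deriv (div_eq_inv_mul a (a * x + b)).symm

private lemma Ffun_hasDeriv {x : ℝ} (hx : 0 < x) :
    HasDerivAt Ffun
      (Real.log (x + 1) - Real.log x - 2 * Real.log (2 * x + 2) + 2 * Real.log (2 * x + 1)
        + 4 / (4 * x + 1) - 1 / x) x := by
  have h0 : x ≠ 0 := hx.ne'
  have h1 : (1:ℝ) * x + 1 ≠ 0 := by simp; linarith
  have h1' : HasDerivAt (fun y : ℝ => Real.log (y + 1)) (1 / (x + 1)) x := by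
    simpa using hasDerivAt_log_affine (a := 1) (b := 1) h1
  have h2 : HasDerivAt (fun y : ℝ => Real.log y) (1 / x) x := by
    simpa [one_div] using Real.hasDerivAt_log h0
  have h3 : HasDerivAt (fun y : ℝ => Real.log (2 * y + 2)) (2 / (2 * x + 2)) x :=
    hasDerivAt_log_affine (by linarith)
  have h4 : HasDerivAt (fun y : ℝ => Real.log (2 * y + 1)) (2 / (2 * x + 1)) x :=
    hasDerivAt_log_affine (by linarith)
  have h5 : HasDerivAt (fun y : ℝ => Real.log (4 * y + 1)) (4 / (4 * x + 1)) x :=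
    hasDerivAt_log_affine (by linarith)
  have h6 : HasDerivAt (fun y : ℝ => Real.log (4 * y)) (4 / (4 * x)) x := by
    simpa using hasDerivAt_log_affine (a := 4) (b := 0) (by simpa using (by positivity : (4:ℝ)*x ≠ 0))
  have hA : HasDerivAt (fun y : ℝ => y * (Real.log (y + 1) - Real.log y))
      (1 * (Real.log (x + 1) - Real.log x) + x * (1 / (x + 1) - 1 / x)) x :=
    (hasDerivAt_id x).mul (h1'.sub h2)
  have hB : HasDerivAt (fun y : ℝ => (2 * y + 1) * (Real.log (2 * y + 2) - Real.log (2 * y + 1)))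
      (2 * (Real.log (2 * x + 2) - Real.log (2 * x + 1)) +
        (2 * x + 1) * (2 / (2 * x + 2) - 2 / (2 * x + 1))) x := by
    have hl : HasDerivAt (fun y : ℝ => 2 * y + 1) 2 x := by
      simpa using ((hasDerivAt_id x).const_mul 2).add_const 1
    exact hl.mul (h3.sub h4)
  have hC : HasDerivAt (fun y : ℝ => Real.log (4 * y + 1) - Real.log (4 * y))
      (4 / (4 * x + 1) - 4 / (4 * x)) x := h5.sub h6
  have := (hA.sub hB).add hC
  refine this.congr_deriv ?_
  have e1 : (2*x+1) * (2/(2*x+2) - 2/(2*x+1)) = -(1/(x+1)) := by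
    field_simp
    ring
  have e2 : x * (1/(x+1) - 1/x) = -(1/(x+1)) := by
    field_simp
    ring
  have e3 : (4:ℝ)/(4*x) = 1/x := by
    field_simp
  rw [e1, e2, e3]
  ring

private lemma Ffun_deriv_neg {x : ℝ} (hx : 0 < x) :
    Real.log (x + 1) - Real.log x - 2 * Real.log (2 * x + 2) + 2 * Real.log (2 * x + 1)
        + 4 / (4 * x + 1) - 1 / x < 0 := by
  have hb : Real.log (x + 1) - Real.log x - 2 * Real.log (2 * x + 2) + 2 * Real.log (2 * x + 1)
      = Real.log ((2 * x + 1) ^ 2) - Real.log ((2 * x + 2) * (2 * x)) := by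
    rw [log_shift hx, Real.log_pow,
      Real.log_mul (show (2*x+2:ℝ) ≠ 0 by positivity) (show (2*x:ℝ) ≠ 0 by positivity)]
    push_cast
    ring
  have hle : Real.log ((2 * x + 1) ^ 2) - Real.log ((2 * x + 2) * (2 * x)) ≤
      (2 * x + 1) ^ 2 / ((2 * x + 2) * (2 * x)) - 1 :=
    log_sub_log_le (by positivity) (by positivity)
  have e4 : (2 * x + 1) ^ 2 / ((2 * x + 2) * (2 * x)) - 1 = 1 / (4 * x ^ 2 + 4 * x) := by
    field_simp
    ring
  have e5 : (4:ℝ) / (4 * x + 1) - 1 / x = -(1 / (x * (4 * x + 1))) := by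
    field_simp
    ring
  have h6 : 1 / (4 * x ^ 2 + 4 * x) < 1 / (x * (4 * x + 1)) := by
    apply one_div_lt_one_div_of_lt
    · positivity
    · nlinarith
  rw [hb]
  rw [e4] at hle
  linarith [hle, h6, e5]
private lemma Gfun_hasDeriv {x : ℝ} (hx : 0 < x) :
    HasDerivAt Gfun
      (Real.log (x + 1) - Real.log x - 2 * Real.log (2 * x + 1) + 2 * Real.log (2 * x)
        - 1 / (x + 1) + 4 / (4 * x + 3)) x := by
  have h0 : x ≠ 0 := hx.ne'
  have h1' : HasDerivAt (fun y : ℝ => Real.log (y + 1)) (1 / (x + 1)) x := by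
    simpa using hasDerivAt_log_affine (a := 1) (b := 1) (by simp; linarith)
  have h2 : HasDerivAt (fun y : ℝ => Real.log y) (1 / x) x := by
    simpa [one_div] using Real.hasDerivAt_log h0
  have h3 : HasDerivAt (fun y : ℝ => Real.log (2 * y + 1)) (2 / (2 * x + 1)) x :=
    hasDerivAt_log_affine (by linarith)
  have h4 : HasDerivAt (fun y : ℝ => Real.log (2 * y)) (2 / (2 * x)) x := by
    simpa using hasDerivAt_log_affine (a := 2) (b := 0) (by simpa using (by positivity : (2:ℝ)*x ≠ 0))
  have h5 : HasDerivAt (fun y : ℝ => Real.log (4 * y + 3)) (4 / (4 * x + 3)) x :=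
    hasDerivAt_log_affine (by linarith)
  have h6 : HasDerivAt (fun y : ℝ => Real.log (4 * y + 2)) (4 / (4 * x + 2)) x :=
    hasDerivAt_log_affine (by linarith)
  have hA : HasDerivAt (fun y : ℝ => y * (Real.log (y + 1) - Real.log y))
      (1 * (Real.log (x + 1) - Real.log x) + x * (1 / (x + 1) - 1 / x)) x :=
    (hasDerivAt_id x).mul (h1'.sub h2)
  have hB : HasDerivAt (fun y : ℝ => 2 * y * (Real.log (2 * y + 1) - Real.log (2 * y)))
      (2 * (Real.log (2 * x + 1) - Real.log (2 * x)) +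
        2 * x * (2 / (2 * x + 1) - 2 / (2 * x))) x := by
    have hl : HasDerivAt (fun y : ℝ => 2 * y) 2 x := by
      simpa using (hasDerivAt_id x).const_mul 2
    exact hl.mul (h3.sub h4)
  have := (hA.sub hB).add (h5.sub h6)
  refine this.congr_deriv ?_
  have e1 : x * (1/(x+1) - 1/x) = -(1/(x+1)) := by field_simp; ring
  have e2 : 2 * x * (2/(2*x+1) - 2/(2*x)) = -(2/(2*x+1)) := by field_simp; ring
  have e3 : (4:ℝ)/(4*x+2) = 2/(2*x+1) := by
    rw [div_eq_div_iff (by linarith) (by linarith)]; ring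
  rw [e1, e2, e3]
  ring

private lemma Gfun_deriv_neg {x : ℝ} (hx : 0 < x) :
    Real.log (x + 1) - Real.log x - 2 * Real.log (2 * x + 1) + 2 * Real.log (2 * x)
        - 1 / (x + 1) + 4 / (4 * x + 3) < 0 := by
  have hb : Real.log (x + 1) - Real.log x - 2 * Real.log (2 * x + 1) + 2 * Real.log (2 * x)
      = Real.log ((2 * x + 2) * (2 * x)) - Real.log ((2 * x + 1) ^ 2) := by
    rw [log_shift hx, Real.log_pow,
      Real.log_mul (show (2*x+2:ℝ) ≠ 0 by positivity) (show (2*x:ℝ) ≠ 0 by positivity)]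
    push_cast
    ring
  have hle : Real.log ((2 * x + 2) * (2 * x)) - Real.log ((2 * x + 1) ^ 2) ≤
      (2 * x + 2) * (2 * x) / ((2 * x + 1) ^ 2) - 1 :=
    log_sub_log_le (by positivity) (by positivity)
  have e4 : (2 * x + 2) * (2 * x) / ((2 * x + 1) ^ 2) - 1 = -(1 / ((2 * x + 1) ^ 2)) := by
    field_simp
    ring
  have e5 : -(1 / (x+1)) + 4 / (4 * x + 3) = 1 / ((x + 1) * (4 * x + 3)) := by
    field_simp
    ring
  have h6 : 1 / ((x + 1) * (4 * x + 3)) < 1 / ((2 * x + 1) ^ 2) := by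
    apply one_div_lt_one_div_of_lt
    · positivity
    · nlinarith
  rw [hb]
  rw [e4] at hle
  linarith [hle, h6, e5]

private lemma phi_tendsto : Tendsto (fun x : ℝ => x * (Real.log (x + 1) - Real.log x))
    atTop (𝓝 1) := by
  apply (tendsto_mul_log_one_add_div_atTop 1).congr'
  filter_upwards [eventually_gt_atTop (0:ℝ)] with x hx
  rw [show (1:ℝ) + 1 / x = (x + 1) / x by field_simp,
    Real.log_div (by linarith) hx.ne']

private lemma log_ratio_tendsto {a b : ℝ} (ha : 0 < a) (hab : 0 ≤ b) :
    Tendsto (fun x : ℝ => Real.log (a * x + b + 1) - Real.log (a * x + b)) atTop (𝓝 0) := by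
  have h1 : Tendsto (fun x : ℝ => a * x + b) atTop atTop :=
    tendsto_atTop_add_const_right _ b (tendsto_id.const_mul_atTop ha)
  have h2 : Tendsto (fun y : ℝ => Real.log (y + 1) - Real.log y) atTop (𝓝 0) := by
    have h3 : Tendsto (fun y : ℝ => 1 + 1 / y) atTop (𝓝 1) := by
      have := (tendsto_inv_atTop_zero (𝕜 := ℝ)).const_add 1
      simpa [one_div] using this
    have h4 : Tendsto Real.log (𝓝 (1:ℝ)) (𝓝 0) := by
      simpa using (Real.continuousAt_log one_ne_zero).tendsto
    apply (h4.comp h3).congr'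
    filter_upwards [eventually_gt_atTop (0:ℝ)] with y hy
    simp only [Function.comp]
    rw [show (1:ℝ) + 1 / y = (y + 1) / y by field_simp,
      Real.log_div (by linarith) hy.ne']
  exact h2.comp h1

private lemma Ffun_tendsto : Tendsto Ffun atTop (𝓝 0) := by
  have l1 := phi_tendsto
  have l2 : Tendsto (fun x : ℝ => (2 * x + 1) * (Real.log (2 * x + 2) - Real.log (2 * x + 1)))
      atTop (𝓝 1) := by
    have h1 : Tendsto (fun x : ℝ => 2 * x + 1) atTop atTop :=
      tendsto_atTop_add_const_right _ 1 (tendsto_id.const_mul_atTop two_pos)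
    have := phi_tendsto.comp h1
    apply this.congr
    intro x
    simp only [Function.comp]
    ring_nf
  have l3 : Tendsto (fun x : ℝ => Real.log (4 * x + 1) - Real.log (4 * x)) atTop (𝓝 0) := by
    simpa using log_ratio_tendsto (a := 4) (b := 0) (by norm_num) le_rfl
  have := (l1.sub l2).add l3
  rw [show (1:ℝ) - 1 + 0 = 0 by norm_num] at this
  exact this
private lemma Gfun_tendsto : Tendsto Gfun atTop (𝓝 0) := by
  have l1 := phi_tendsto
  have l2 : Tendsto (fun x : ℝ => 2 * x * (Real.log (2 * x + 1) - Real.log (2 * x)))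
      atTop (𝓝 1) := by
    have h1 : Tendsto (fun x : ℝ => 2 * x) atTop atTop := tendsto_id.const_mul_atTop two_pos
    have := phi_tendsto.comp h1
    apply this.congr
    intro x
    simp only [Function.comp]
  have l3 : Tendsto (fun x : ℝ => Real.log (4 * x + 3) - Real.log (4 * x + 2)) atTop (𝓝 0) := by
    have := log_ratio_tendsto (a := 4) (b := 2) (by norm_num) (by norm_num)
    apply this.congr
    intro x
    ring_nf
  have := (l1.sub l2).add l3
  rw [show (1:ℝ) - 1 + 0 = 0 by norm_num] at this
  exact this

private lemma Ffun_pos {x : ℝ} (hx : 0 < x) : 0 < Ffun x := by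
  refine pos_of_strictAntiOn_tendsto ?_ Ffun_tendsto hx
  apply strictAntiOn_of_deriv_neg (convex_Ioi 0)
  · intro y hy
    exact (Ffun_hasDeriv (mem_Ioi.mp hy)).continuousAt.continuousWithinAt
  · intro y hy
    rw [interior_Ioi, mem_Ioi] at hy
    rw [(Ffun_hasDeriv hy).deriv]
    exact Ffun_deriv_neg hy

private lemma Gfun_pos {x : ℝ} (hx : 0 < x) : 0 < Gfun x := by
  refine pos_of_strictAntiOn_tendsto ?_ Gfun_tendsto hx
  apply strictAntiOn_of_deriv_neg (convex_Ioi 0)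
  · intro y hy
    exact (Gfun_hasDeriv (mem_Ioi.mp hy)).continuousAt.continuousWithinAt
  · intro y hy
    rw [interior_Ioi, mem_Ioi] at hy
    rw [(Gfun_hasDeriv hy).deriv]
    exact Gfun_deriv_neg hy

private lemma E1 {x : ℝ} (hx : 0 < x) :
    ((2 * x + 2) / (2 * x + 1)) ^ (2 * x + 1) <
      ((x + 1) / x) ^ x * ((4 * x + 1) / (4 * x)) := by
  have hL : ((2 * x + 2) / (2 * x + 1) : ℝ) ^ (2 * x + 1) =
      Real.exp ((2 * x + 1) * (Real.log (2 * x + 2) - Real.log (2 * x + 1))) := by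
    rw [Real.rpow_def_of_pos (by positivity),
      Real.log_div (by positivity) (by positivity)]
    ring_nf
  have hR : ((x + 1) / x : ℝ) ^ x * ((4 * x + 1) / (4 * x)) =
      Real.exp (x * (Real.log (x + 1) - Real.log x) +
        (Real.log (4 * x + 1) - Real.log (4 * x))) := by
    rw [Real.exp_add, Real.rpow_def_of_pos (by positivity)]
    congr 1
    · congr 1
      rw [Real.log_div (by positivity) (by positivity)]
      ring
    · rw [← Real.log_div (by positivity) (by positivity), Real.exp_log (by positivity)]
  rw [hL, hR]
  apply Real.exp_lt_exp.mpr
  have := Ffun_pos hx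
  unfold Ffun at this
  linarith

private lemma E2 {x : ℝ} (hx : 0 < x) :
    ((2 * x + 1) / (2 * x)) ^ (2 * x) <
      ((x + 1) / x) ^ x * ((4 * x + 3) / (4 * x + 2)) := by
  have hL : ((2 * x + 1) / (2 * x) : ℝ) ^ (2 * x) =
      Real.exp (2 * x * (Real.log (2 * x + 1) - Real.log (2 * x))) := by
    rw [Real.rpow_def_of_pos (by positivity),
      Real.log_div (by positivity) (by positivity)]
    ring_nf
  have hR : ((x + 1) / x : ℝ) ^ x * ((4 * x + 3) / (4 * x + 2)) =
      Real.exp (x * (Real.log (x + 1) - Real.log x) +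
        (Real.log (4 * x + 3) - Real.log (4 * x + 2))) := by
    rw [Real.exp_add, Real.rpow_def_of_pos (by positivity)]
    congr 1
    · congr 1
      rw [Real.log_div (by positivity) (by positivity)]
      ring
    · rw [← Real.log_div (by positivity) (by positivity), Real.exp_log (by positivity)]
  rw [hL, hR]
  apply Real.exp_lt_exp.mpr
  have := Gfun_pos hx
  unfold Gfun at this
  linarith
private noncomputable def Jb (s : ℝ) : ℝ :=
  ∫ x in Ioo (0:ℝ) 1, x ^ (s - 1) * (1 - x) ^ (-(1/2) : ℝ)

private lemma beta_integrand_eq {s x : ℝ} (hx : x ∈ Ioo (0:ℝ) 1) :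
    ((x ^ (s - 1) * (1 - x) ^ (-(1/2) : ℝ) : ℝ) : ℂ) =
      (x : ℂ) ^ ((s : ℂ) - 1) * ((1 : ℂ) - (x : ℂ)) ^ ((1/2 : ℂ) - 1) := by
  rw [Complex.ofReal_mul, Complex.ofReal_cpow hx.1.le,
    Complex.ofReal_cpow (by linarith [hx.2] : (0:ℝ) ≤ 1 - x)]
  push_cast
  norm_num

private lemma Jb_integrableOn {s : ℝ} (hs : 0 < s) :
    IntegrableOn (fun x : ℝ => x ^ (s - 1) * (1 - x) ^ (-(1/2) : ℝ)) (Ioo 0 1) := by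
  have hc : IntervalIntegrable
      (fun x : ℝ => (x : ℂ) ^ ((s : ℂ) - 1) * ((1 : ℂ) - (x : ℂ)) ^ ((1/2 : ℂ) - 1))
      volume 0 1 :=
    Complex.betaIntegral_convergent (by simpa using hs) (by norm_num)
  have h2 : IntegrableOn
      (fun x : ℝ => (x : ℂ) ^ ((s : ℂ) - 1) * ((1 : ℂ) - (x : ℂ)) ^ ((1/2 : ℂ) - 1))
      (Ioo 0 1) := by
    have := (intervalIntegrable_iff_integrableOn_Ioc_of_le zero_le_one).mp hc
    exact this.mono_set Ioo_subset_Ioc_self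
  have h3 := h2.re
  apply MeasureTheory.IntegrableOn.congr_fun h3 ?_ measurableSet_Ioo
  intro x hx
  dsimp only
  rw [← beta_integrand_eq hx]
  simp

private lemma Jb_eq {s : ℝ} (hs : 0 < s) :
    Jb s = Real.Gamma s * Real.Gamma (1/2) / Real.Gamma (s + 1/2) := by
  have hbeta := Complex.Gamma_mul_Gamma_eq_betaIntegral (s := (s:ℂ)) (t := (1/2:ℂ))
    (by simpa using hs) (by norm_num)
  have hJ : Complex.betaIntegral s (1/2) = (Jb s : ℂ) := by
    rw [Complex.betaIntegral, intervalIntegral.integral_of_le zero_le_one,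
      MeasureTheory.integral_Ioc_eq_integral_Ioo, Jb]
    rw [setIntegral_congr_fun measurableSet_Ioo
      (fun x hx => (beta_integrand_eq (s := s) hx).symm)]
    exact integral_ofReal
  rw [hJ] at hbeta
  have hcast : ((s:ℂ) + (1/2:ℂ)) = ((s + 1/2 : ℝ) : ℂ) := by push_cast; ring
  rw [hcast] at hbeta
  rw [show (1/2 : ℂ) = ((1/2 : ℝ) : ℂ) by push_cast; ring] at hbeta
  rw [Complex.Gamma_ofReal, Complex.Gamma_ofReal, Complex.Gamma_ofReal] at hbeta
  have hreal : Real.Gamma s * Real.Gamma (1/2) = Real.Gamma (s + 1/2) * Jb s := by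
    exact_mod_cast hbeta
  have hne : Real.Gamma (s + 1/2) ≠ 0 := (Real.Gamma_pos_of_pos (by linarith)).ne'
  rw [eq_div_iff hne]
  linarith [hreal]
private lemma Jb_half_integrand_memL2 {u : ℝ} (hu : 0 < u) :
    MemLp (fun x : ℝ => x ^ ((u - 1) / 2) * (1 - x) ^ (-(1/4) : ℝ)) (ENNReal.ofReal 2)
      (volume.restrict (Ioo (0:ℝ) 1)) := by
  have A : ENNReal.ofReal 2 ≠ 0 := by
    simp [ENNReal.ofReal_eq_zero]
  have B : ENNReal.ofReal 2 ≠ ⊤ := ENNReal.ofReal_ne_top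
  have hmeas : AEStronglyMeasurable (fun x : ℝ => x ^ ((u - 1) / 2) * (1 - x) ^ (-(1/4) : ℝ))
      (volume.restrict (Ioo (0:ℝ) 1)) := by
    apply ContinuousOn.aestronglyMeasurable ?_ measurableSet_Ioo
    apply ContinuousOn.mul
    · apply continuousOn_of_forall_continuousAt
      intro x hx
      exact Real.continuousAt_rpow_const x _ (Or.inl hx.1.ne')
    · apply continuousOn_of_forall_continuousAt
      intro x hx
      have h1x : (1:ℝ) - x ≠ 0 := by
        have := hx.2
        simp only [mem_Ioo] at hx
        linarith [hx.2]
      exact (Real.continuousAt_rpow_const (1 - x) _ (Or.inl h1x)).comp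
        ((continuous_const.sub continuous_id).continuousAt)
  rw [← MeasureTheory.memLp_norm_rpow_iff hmeas A B,
    ENNReal.toReal_ofReal (by norm_num : (0:ℝ) ≤ 2), ENNReal.div_self A B,
    memLp_one_iff_integrable]
  apply MeasureTheory.Integrable.congr (Jb_integrableOn hu)
  rw [EventuallyEq, ae_restrict_iff' measurableSet_Ioo]
  apply ae_of_all
  intro x hx
  have h0 : (0:ℝ) ≤ x := hx.1.le
  have h1 : (0:ℝ) ≤ 1 - x := by linarith [hx.2]
  rw [Real.norm_of_nonneg (mul_nonneg (Real.rpow_nonneg h0 _) (Real.rpow_nonneg h1 _)),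
    Real.mul_rpow (Real.rpow_nonneg h0 _) (Real.rpow_nonneg h1 _),
    ← Real.rpow_mul h0, ← Real.rpow_mul h1]
  norm_num

private lemma Jb_sq_le {s t : ℝ} (hs : 0 < s) (ht : 0 < t) :
    Jb ((s + t) / 2) ≤ Jb s ^ ((1:ℝ)/2) * Jb t ^ ((1:ℝ)/2) := by
  have e : (2:ℝ).HolderConjugate 2 := ⟨by norm_num, by norm_num, by norm_num⟩
  have hf0 : 0 ≤ᵐ[volume.restrict (Ioo (0:ℝ) 1)]
      (fun x : ℝ => x ^ ((s - 1) / 2) * (1 - x) ^ (-(1/4) : ℝ)) :=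
    (ae_restrict_iff' measurableSet_Ioo).mpr (ae_of_all _ fun x hx =>
      mul_nonneg (Real.rpow_nonneg hx.1.le _) (Real.rpow_nonneg (by linarith [hx.2]) _))
  have hg0 : 0 ≤ᵐ[volume.restrict (Ioo (0:ℝ) 1)]
      (fun x : ℝ => x ^ ((t - 1) / 2) * (1 - x) ^ (-(1/4) : ℝ)) :=
    (ae_restrict_iff' measurableSet_Ioo).mpr (ae_of_all _ fun x hx =>
      mul_nonneg (Real.rpow_nonneg hx.1.le _) (Real.rpow_nonneg (by linarith [hx.2]) _))
  have hH := MeasureTheory.integral_mul_le_Lp_mul_Lq_of_nonneg e hf0 hg0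
    (Jb_half_integrand_memL2 hs) (Jb_half_integrand_memL2 ht)
  have eL : ∫ x in Ioo (0:ℝ) 1, (x ^ ((s - 1) / 2) * (1 - x) ^ (-(1/4) : ℝ)) *
      (x ^ ((t - 1) / 2) * (1 - x) ^ (-(1/4) : ℝ)) = Jb ((s + t) / 2) := by
    apply setIntegral_congr_fun measurableSet_Ioo
    intro x hx
    have h0 : (0:ℝ) < x := hx.1
    have h1 : (0:ℝ) < 1 - x := by linarith [hx.2]
    dsimp only
    rw [show (s + t) / 2 - 1 = (s - 1) / 2 + (t - 1) / 2 by ring,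
      show (-(1/2) : ℝ) = -(1/4) + -(1/4) by norm_num,
      Real.rpow_add h0, Real.rpow_add h1]
    ring
  have eR1 : ∫ x in Ioo (0:ℝ) 1, (x ^ ((s - 1) / 2) * (1 - x) ^ (-(1/4) : ℝ)) ^ (2:ℝ) = Jb s := by
    apply setIntegral_congr_fun measurableSet_Ioo
    intro x hx
    have h0 : (0:ℝ) ≤ x := hx.1.le
    have h1 : (0:ℝ) ≤ 1 - x := by linarith [hx.2]
    dsimp only
    rw [Real.mul_rpow (Real.rpow_nonneg h0 _) (Real.rpow_nonneg h1 _),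
      ← Real.rpow_mul h0, ← Real.rpow_mul h1]
    norm_num
  have eR2 : ∫ x in Ioo (0:ℝ) 1, (x ^ ((t - 1) / 2) * (1 - x) ^ (-(1/4) : ℝ)) ^ (2:ℝ) = Jb t := by
    apply setIntegral_congr_fun measurableSet_Ioo
    intro x hx
    have h0 : (0:ℝ) ≤ x := hx.1.le
    have h1 : (0:ℝ) ≤ 1 - x := by linarith [hx.2]
    dsimp only
    rw [Real.mul_rpow (Real.rpow_nonneg h0 _) (Real.rpow_nonneg h1 _),
      ← Real.rpow_mul h0, ← Real.rpow_mul h1]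
    norm_num
  rw [eL, eR1, eR2] at hH
  exact hH

private lemma kershaw {x : ℝ} (hx : 0 < x) :
    (Real.Gamma (x + 1/2) / Real.Gamma (x + 1)) ^ 2 ≤ 1 / (x + 1/4) := by
  have hq : (0:ℝ) < x + 1/4 := by linarith
  have hs : (0:ℝ) < x + 1/4 := hq
  have ht : (0:ℝ) < x + 3/4 := by linarith
  have hg1 : (0:ℝ) < Real.Gamma (x + 1/4) := Real.Gamma_pos_of_pos hs
  have hg2 : (0:ℝ) < Real.Gamma (x + 1/2) := Real.Gamma_pos_of_pos (by linarith)
  have hg3 : (0:ℝ) < Real.Gamma (x + 3/4) := Real.Gamma_pos_of_pos ht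
  have hg4 : (0:ℝ) < Real.Gamma (x + 1) := Real.Gamma_pos_of_pos (by linarith)
  have hgh : (0:ℝ) < Real.Gamma (1/2) := Real.Gamma_pos_of_pos (by norm_num)
  have hCS := Jb_sq_le hs ht
  rw [show ((x + 1/4) + (x + 3/4)) / 2 = x + 1/2 by ring] at hCS
  rw [Jb_eq (by linarith : (0:ℝ) < x + 1/2), Jb_eq hs, Jb_eq ht] at hCS
  rw [show x + 1/2 + 1/2 = x + 1 by ring, show x + 1/4 + 1/2 = x + 3/4 by ring,
    show x + 3/4 + 1/2 = (x + 1/4) + 1 by ring, Real.Gamma_add_one hs.ne'] at hCS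
  set B := Real.Gamma (x + 1/4) * Real.Gamma (1/2) / Real.Gamma (x + 3/4) with hB
  set C := Real.Gamma (x + 3/4) * Real.Gamma (1/2) / ((x + 1/4) * Real.Gamma (x + 1/4)) with hC
  have hBpos : 0 < B := by rw [hB]; positivity
  have hCpos : 0 < C := by rw [hC]; positivity
  have hApos : 0 ≤ Real.Gamma (x + 1/2) * Real.Gamma (1/2) / Real.Gamma (x + 1) := by positivity
  have hsq := mul_self_le_mul_self hApos hCS
  have hBC : (B ^ ((1:ℝ)/2) * C ^ ((1:ℝ)/2)) * (B ^ ((1:ℝ)/2) * C ^ ((1:ℝ)/2)) = B * C := by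
    rw [mul_mul_mul_comm, ← Real.rpow_add hBpos, ← Real.rpow_add hCpos]
    norm_num
  rw [hBC] at hsq
  have hBCval : B * C = Real.Gamma (1/2) ^ 2 / (x + 1/4) := by
    rw [hB, hC]
    field_simp
  rw [hBCval] at hsq
  -- hsq : (Γ(x+1/2)Γ(1/2)/Γ(x+1)) * (Γ(x+1/2)Γ(1/2)/Γ(x+1)) ≤ Γ(1/2)^2/(x+1/4)
  rw [div_pow, div_le_div_iff₀ (by positivity) hq]
  have hK : (0:ℝ) < Real.Gamma (1/2) ^ 2 := by positivity
  have h' : (Real.Gamma (x + 1/2) ^ 2 * (x + 1/4)) * (Real.Gamma (1/2) ^ 2 / Real.Gamma (x+1) ^ 2 / (x + 1/4)) ≤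
      (1 * Real.Gamma (x + 1) ^ 2) * (Real.Gamma (1/2) ^ 2 / Real.Gamma (x+1) ^ 2 / (x + 1/4)) := by
    have e1 : (Real.Gamma (x + 1/2) ^ 2 * (x + 1/4)) *
        (Real.Gamma (1/2) ^ 2 / Real.Gamma (x+1) ^ 2 / (x + 1/4)) =
        (Real.Gamma (x + 1/2) * Real.Gamma (1/2) / Real.Gamma (x + 1)) *
        (Real.Gamma (x + 1/2) * Real.Gamma (1/2) / Real.Gamma (x + 1)) := by
      field_simp
    have e2 : (1 * Real.Gamma (x + 1) ^ 2) *
        (Real.Gamma (1/2) ^ 2 / Real.Gamma (x+1) ^ 2 / (x + 1/4)) =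
        Real.Gamma (1/2) ^ 2 / (x + 1/4) := by
      field_simp
    rw [e1, e2]
    exact hsq
  exact le_of_mul_le_mul_right h' (by positivity)
theorem gaussian_entropy_power_exceeds_optimal_isoperimetric_constant
    (α : ℝ) (hα : 0 < α) (hne : α ≠ 1) :
    2 * π * α ^ (1 / (α - 1)) >
      if 1 < α then
        2 * π / (α - 1) * (2 * α / (α + 1)) ^ ((α + 1) / (α - 1)) *
          (Gamma ((α + 1) / (2 * (α - 1))) / Gamma (α / (α - 1))) ^ 2
      else
        4 * π * α / (1 - α ^ 2) * ((α + 1) / (2 * α)) ^ (2 * α / (1 - α)) *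
          (Gamma (α / (1 - α)) / Gamma ((α + 1) / (2 * (1 - α)))) ^ 2 := by
  by_cases h : 1 < α
  · rw [if_pos h]
    have hd : α - 1 ≠ 0 := by linarith
    obtain ⟨β, hβ, rfl⟩ : ∃ β : ℝ, 0 < β ∧ α = (β + 1) / β :=
      ⟨1 / (α - 1), div_pos one_pos (by linarith), by field_simp; ring⟩
    have hb : β ≠ 0 := hβ.ne'
    have e1 : 1 / ((β + 1) / β - 1) = β := by
      rw [show (β + 1) / β - 1 = 1 / β by field_simp; ring]
      simp
    have e2 : 2 * ((β + 1) / β) / ((β + 1) / β + 1) = (2 * β + 2) / (2 * β + 1) := by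
      rw [div_eq_div_iff (by positivity) (by positivity)]
      field_simp
      try ring
    have e3 : ((β + 1) / β + 1) / ((β + 1) / β - 1) = 2 * β + 1 := by
      rw [div_eq_iff (by rw [show (β + 1) / β - 1 = 1 / β by field_simp; ring]; positivity)]
      field_simp
      try ring
    have e4 : ((β + 1) / β + 1) / (2 * ((β + 1) / β - 1)) = β + 1 / 2 := by
      rw [div_eq_iff (by rw [show (β + 1) / β - 1 = 1 / β by field_simp; ring]; positivity)]
      field_simp
      try ring
    have e5 : (β + 1) / β / ((β + 1) / β - 1) = β + 1 := by
      rw [div_eq_iff (by rw [show (β + 1) / β - 1 = 1 / β by field_simp; ring]; positivity)]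
      field_simp
      try ring
    have e6 : 2 * π / ((β + 1) / β - 1) = 2 * π * β := by
      rw [show (β + 1) / β - 1 = 1 / β by field_simp; ring]
      field_simp
      try ring
    rw [e1, e2, e3, e4, e5, e6]
    have hK := kershaw hβ
    have hE := E1 hβ
    have hPpos : (0:ℝ) < ((β + 1) / β) ^ β := Real.rpow_pos_of_pos (by positivity) _
    have hQpos : (0:ℝ) < ((2 * β + 2) / (2 * β + 1)) ^ (2 * β + 1) :=
      Real.rpow_pos_of_pos (by positivity) _
    have step1 : 2 * π * β * ((2 * β + 2) / (2 * β + 1)) ^ (2 * β + 1) *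
        (Gamma (β + 1 / 2) / Gamma (β + 1)) ^ 2 ≤
        2 * π * β * ((2 * β + 2) / (2 * β + 1)) ^ (2 * β + 1) * (1 / (β + 1 / 4)) :=
      mul_le_mul_of_nonneg_left hK (by positivity)
    have step2 : 2 * π * β * ((2 * β + 2) / (2 * β + 1)) ^ (2 * β + 1) * (1 / (β + 1 / 4)) <
        2 * π * β * (((β + 1) / β) ^ β * ((4 * β + 1) / (4 * β))) * (1 / (β + 1 / 4)) :=
      mul_lt_mul_of_pos_right (mul_lt_mul_of_pos_left hE (by positivity)) (by positivity)
    have step3 : 2 * π * β * (((β + 1) / β) ^ β * ((4 * β + 1) / (4 * β))) * (1 / (β + 1 / 4)) =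
        2 * π * ((β + 1) / β) ^ β := by
      field_simp
      try ring
    linarith
  · rw [if_neg h]
    have hlt : α < 1 := lt_of_le_of_ne (not_lt.mp h) hne
    have hd : 1 - α ≠ 0 := by linarith
    obtain ⟨γ, hγ, rfl⟩ : ∃ γ : ℝ, 0 < γ ∧ α = γ / (γ + 1) :=
      ⟨α / (1 - α), div_pos hα (by linarith), by field_simp; ring⟩
    have hg : γ ≠ 0 := hγ.ne'
    have hg1 : (0:ℝ) < γ + 1 := by linarith
    have f0 : 1 - γ / (γ + 1) = 1 / (γ + 1) := by field_simp; ring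
    have f1 : 1 / (γ / (γ + 1) - 1) = -(γ + 1) := by
      rw [show γ / (γ + 1) - 1 = -(1 / (γ + 1)) by field_simp; ring]
      rw [one_div, inv_neg, one_div, inv_inv]
    have f2 : γ / (γ + 1) / (1 - γ / (γ + 1)) = γ := by
      rw [f0]
      field_simp
      try ring
    have f3 : (γ / (γ + 1) + 1) / (2 * (1 - γ / (γ + 1))) = γ + 1 / 2 := by
      rw [f0, div_eq_iff (by positivity)]
      field_simp
      try ring
    have f4 : 2 * (γ / (γ + 1)) / (1 - γ / (γ + 1)) = 2 * γ := by
      rw [f0, div_eq_iff (by positivity)]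
      field_simp
      try ring
    have f5 : (γ / (γ + 1) + 1) / (2 * (γ / (γ + 1))) = (2 * γ + 1) / (2 * γ) := by
      rw [div_eq_div_iff (by positivity) (by positivity)]
      field_simp
      try ring
    have f6 : 4 * π * (γ / (γ + 1)) / (1 - (γ / (γ + 1)) ^ 2) = 4 * π * γ * (γ + 1) / (2 * γ + 1) := by
      rw [show 1 - (γ / (γ + 1)) ^ 2 = (2 * γ + 1) / (γ + 1) ^ 2 by field_simp; ring,
        div_eq_div_iff (by positivity) (by positivity)]
      field_simp
      try ring
    have f7 : (γ / (γ + 1)) ^ (-(γ + 1) : ℝ) = ((γ + 1) / γ) ^ ((γ + 1) : ℝ) := by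
      rw [Real.rpow_neg (by positivity), ← Real.inv_rpow (by positivity), inv_div]
    rw [f1, f2, f3, f4, f5, f6, f7]
    have hk := kershaw (show (0:ℝ) < γ + 1 / 2 by linarith)
    rw [show γ + 1 / 2 + 1 / 2 = γ + 1 by ring, show γ + 1 / 2 + 1 = γ + 3 / 2 by ring,
      show γ + 1 / 2 + 1 / 4 = γ + 3 / 4 by ring] at hk
    have hGpos1 : (0:ℝ) < Gamma γ := Real.Gamma_pos_of_pos hγ
    have hGpos2 : (0:ℝ) < Gamma (γ + 1 / 2) := Real.Gamma_pos_of_pos (by linarith)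
    have hratio : Gamma γ / Gamma (γ + 1 / 2) =
        (γ + 1 / 2) / γ * (Gamma (γ + 1) / Gamma (γ + 3 / 2)) := by
      rw [Real.Gamma_add_one hg, show γ + 3 / 2 = (γ + 1 / 2) + 1 by ring,
        Real.Gamma_add_one (by positivity)]
      field_simp
      try ring
    have hB2 : (Gamma γ / Gamma (γ + 1 / 2)) ^ 2 ≤ (γ + 1 / 2) ^ 2 / (γ ^ 2 * (γ + 3 / 4)) := by
      calc (Gamma γ / Gamma (γ + 1 / 2)) ^ 2
          = ((γ + 1 / 2) / γ) ^ 2 * (Gamma (γ + 1) / Gamma (γ + 3 / 2)) ^ 2 := by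
            rw [hratio, mul_pow]
        _ ≤ ((γ + 1 / 2) / γ) ^ 2 * (1 / (γ + 3 / 4)) :=
            mul_le_mul_of_nonneg_left hk (by positivity)
        _ = (γ + 1 / 2) ^ 2 / (γ ^ 2 * (γ + 3 / 4)) := by
            rw [div_pow]
            field_simp
            try ring
    have hE := E2 hγ
    have hPpos : (0:ℝ) < ((γ + 1) / γ) ^ γ := Real.rpow_pos_of_pos (by positivity) _
    have hQpos : (0:ℝ) < ((2 * γ + 1) / (2 * γ)) ^ (2 * γ) :=
      Real.rpow_pos_of_pos (by positivity) _
    have step1 : 4 * π * γ * (γ + 1) / (2 * γ + 1) * ((2 * γ + 1) / (2 * γ)) ^ (2 * γ) *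
        (Gamma γ / Gamma (γ + 1 / 2)) ^ 2 ≤
        4 * π * γ * (γ + 1) / (2 * γ + 1) * ((2 * γ + 1) / (2 * γ)) ^ (2 * γ) *
        ((γ + 1 / 2) ^ 2 / (γ ^ 2 * (γ + 3 / 4))) :=
      mul_le_mul_of_nonneg_left hB2 (by positivity)
    have step2 : 4 * π * γ * (γ + 1) / (2 * γ + 1) * ((2 * γ + 1) / (2 * γ)) ^ (2 * γ) *
        ((γ + 1 / 2) ^ 2 / (γ ^ 2 * (γ + 3 / 4))) <
        4 * π * γ * (γ + 1) / (2 * γ + 1) * (((γ + 1) / γ) ^ γ * ((4 * γ + 3) / (4 * γ + 2))) *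
        ((γ + 1 / 2) ^ 2 / (γ ^ 2 * (γ + 3 / 4))) :=
      mul_lt_mul_of_pos_right (mul_lt_mul_of_pos_left hE (by positivity)) (by positivity)
    have step3 : 4 * π * γ * (γ + 1) / (2 * γ + 1) * (((γ + 1) / γ) ^ γ * ((4 * γ + 3) / (4 * γ + 2))) *
        ((γ + 1 / 2) ^ 2 / (γ ^ 2 * (γ + 3 / 4))) = 2 * π * (((γ + 1) / γ) ^ γ * ((γ + 1) / γ)) := by
      field_simp
      try ring
    have hfin : 2 * π * ((γ + 1) / γ) ^ ((γ + 1) : ℝ) =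
        2 * π * (((γ + 1) / γ) ^ γ * ((γ + 1) / γ)) := by
      rw [Real.rpow_add (by positivity), Real.rpow_one]
    rw [hfin]
    linarith
end
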